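/- Let 𝒞 be a collection of nonempty, pairwise incomparable subsets of a finite set E such that every modular pair C₁, C₂ in 𝒞 satisfies circuit elimination (for each e ∈ C₁ ∩ C₂ there exists C₃ ∈ 𝒞 with C₃ ⊆ (C₁ ∪ C₂) \ {e}). Then 𝒞 is the set of circuits of a matroid on E. -/

import Mathlib

open Set

variable {α : Type*}

/-- A circuit of a matroid: a minimal dependent set. -/
def Matroid.IsCircuit' (M : Matroid α) (C : Set α) : Prop :=
  M.Dep C ∧ ∀ D, D ⊂ C → ¬ M.Dep D

/-- The rank (in `ℕ∞`) of a set in a matroid: the supremum of the cardinalities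
of independent subsets. -/
noncomputable def Matroid.rk' (M : Matroid α) (X : Set α) : ℕ∞ :=
  ⨆ I : {I : Set α // M.Indep I ∧ I ⊆ X}, (I : Set α).encard

/-- Two distinct circuits `C₁, C₂` form a modular pair if `C₁ ∪ C₂` does not
properly contain the union of two distinct circuits of `M`. -/
def Matroid.ModularPairOfCircuits (M : Matroid α) (C₁ C₂ : Set α) : Prop :=
  C₁ ≠ C₂ ∧ ∀ D₁ D₂, M.IsCircuit' D₁ → M.IsCircuit' D₂ → D₁ ≠ D₂ →
    ¬ (D₁ ∪ D₂ ⊂ C₁ ∪ C₂)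


lemma aux_full_elim (E : Set α) (hE : E.Finite) (𝒞 : Set (Set α))
    (hsub : ∀ C ∈ 𝒞, C ⊆ E)
    (helim : ∀ C₁ ∈ 𝒞, ∀ C₂ ∈ 𝒞, C₁ ≠ C₂ →
      (∀ D₁ ∈ 𝒞, ∀ D₂ ∈ 𝒞, D₁ ≠ D₂ → ¬ (D₁ ∪ D₂ ⊂ C₁ ∪ C₂)) →
      ∀ e ∈ C₁ ∩ C₂, ∃ C₃ ∈ 𝒞, C₃ ⊆ (C₁ ∪ C₂) \ {e}) :
    ∀ n : ℕ, ∀ C₁ ∈ 𝒞, ∀ C₂ ∈ 𝒞, C₁ ≠ C₂ → (C₁ ∪ C₂).ncard ≤ n →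
      ∀ e ∈ C₁ ∩ C₂, ∃ C₃ ∈ 𝒞, C₃ ⊆ (C₁ ∪ C₂) \ {e} := by
  intro n
  induction n with
  | zero =>
    intro C₁ h₁ C₂ h₂ hne hcard e he
    have hfin : (C₁ ∪ C₂).Finite := hE.subset (union_subset (hsub _ h₁) (hsub _ h₂))
    have hpos : 0 < (C₁ ∪ C₂).ncard := (Set.ncard_pos hfin).mpr ⟨e, Or.inl he.1⟩
    omega
  | succ n ih =>
    intro C₁ h₁ C₂ h₂ hne hcard e he
    by_cases hmod : ∀ D₁ ∈ 𝒞, ∀ D₂ ∈ 𝒞, D₁ ≠ D₂ → ¬ (D₁ ∪ D₂ ⊂ C₁ ∪ C₂)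
    · exact helim C₁ h₁ C₂ h₂ hne hmod e he
    · push_neg at hmod
      obtain ⟨D₁, hD₁, D₂, hD₂, hDne, hss⟩ := hmod
      by_cases he₁ : e ∈ D₁
      · by_cases he₂ : e ∈ D₂
        · have hfin : (C₁ ∪ C₂).Finite := hE.subset (union_subset (hsub _ h₁) (hsub _ h₂))
          have hlt : (D₁ ∪ D₂).ncard < (C₁ ∪ C₂).ncard := Set.ncard_lt_ncard hss hfin
          obtain ⟨C₃, hC₃, hsub₃⟩ := ih D₁ hD₁ D₂ hD₂ hDne (by omega) e ⟨he₁, he₂⟩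
          exact ⟨C₃, hC₃, hsub₃.trans (diff_subset_diff_left hss.1)⟩
        · exact ⟨D₂, hD₂, fun x hx => ⟨hss.1 (Or.inr hx), fun hxe => he₂ (hxe ▸ hx)⟩⟩
      · exact ⟨D₁, hD₁, fun x hx => ⟨hss.1 (Or.inl hx), fun hxe => he₁ (hxe ▸ hx)⟩⟩


lemma aux_aug (E : Set α) (hE : E.Finite) (𝒞 : Set (Set α))
    (hfe : ∀ C₁ ∈ 𝒞, ∀ C₂ ∈ 𝒞, C₁ ≠ C₂ →
      ∀ e ∈ C₁ ∩ C₂, ∃ C₃ ∈ 𝒞, C₃ ⊆ (C₁ ∪ C₂) \ {e}) :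
    ∀ ⦃I J : Set α⦄, (I ⊆ E ∧ ∀ C ∈ 𝒞, ¬ C ⊆ I) → (J ⊆ E ∧ ∀ C ∈ 𝒞, ¬ C ⊆ J) →
      I.ncard < J.ncard →
      ∃ e ∈ J, e ∉ I ∧ ((insert e I) ⊆ E ∧ ∀ C ∈ 𝒞, ¬ C ⊆ insert e I) := by
  intro I J hI hJ hcard
  by_contra hcon
  push_neg at hcon
  -- the set of candidates
  set Ind : Set α → Prop := fun K => K ⊆ E ∧ ∀ C ∈ 𝒞, ¬ C ⊆ K with hInd
  set S : Set (Set α) := {K | K ⊆ I ∪ J ∧ Ind K ∧ I.ncard < K.ncard} with hS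
  have hJS : J ∈ S := ⟨subset_union_right, hJ, hcard⟩
  have hTne : ((fun K => (I \ K).ncard) '' S).Nonempty := ⟨_, ⟨J, hJS, rfl⟩⟩
  obtain ⟨K, hKS, hKmin⟩ : ∃ K ∈ S, ∀ K' ∈ S, (I \ K).ncard ≤ (I \ K').ncard := by
    obtain ⟨K, hKS, hK⟩ := Nat.sInf_mem hTne
    exact ⟨K, hKS, fun K' hK' => le_trans (le_of_eq hK) (Nat.sInf_le ⟨K', hK', rfl⟩)⟩
  obtain ⟨hKsub, hKind, hKcard⟩ := hKS
  have hIfin : I.Finite := hE.subset hI.1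
  have hKfin : K.Finite := hE.subset hKind.1
  by_cases hIK : I ⊆ K
  · -- then augment directly
    have : ¬ K ⊆ I := fun h => absurd (Set.ncard_le_ncard h hIfin) (by omega)
    obtain ⟨e, heK, heI⟩ := not_subset.mp this
    have heJ : e ∈ J := (hKsub heK).resolve_left heI
    obtain ⟨C, hC, hCs⟩ := hcon e heJ heI (insert_subset (hJ.1 heJ) hI.1)
    exact hKind.2 C hC (hCs.trans (insert_subset heK hIK))
  · obtain ⟨e, heI, heK⟩ := not_subset.mp hIK
    -- for each f in K \ I, the swap set contains a circuit through e
    have key : ∀ f ∈ K \ I, ∃ C ∈ 𝒞, e ∈ C ∧ C ⊆ insert e (K \ {f}) := by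
      intro f hf
      set K' := insert e (K \ {f}) with hK'
      have heK' : e ∉ K \ {f} := fun h => heK h.1
      have hK'fin : (K \ {f}).Finite := hKfin.diff
      have hK'card : K'.ncard = K.ncard := by
        rw [hK', Set.ncard_insert_of_notMem heK' hK'fin,
          Set.ncard_diff_singleton_of_mem hf.1]
        have : 0 < K.ncard := (Set.ncard_pos hKfin).mpr ⟨f, hf.1⟩
        omega
      have hK'sub : K' ⊆ I ∪ J :=
        insert_subset (Or.inl heI) (diff_subset.trans hKsub)
      have hIK' : I \ K' = (I \ K) \ {e} := by
        ext x
        constructor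
        · rintro ⟨hxI, hx⟩
          exact ⟨⟨hxI, fun hxK => hx (Or.inr ⟨hxK, fun hxf => hf.2 (hxf ▸ hxI)⟩)⟩,
            fun hxe => hx (Or.inl hxe)⟩
        · rintro ⟨⟨hxI, hxK⟩, hxe⟩
          exact ⟨hxI, fun h => h.elim (fun h' => hxe h') (fun h' => hxK h'.1)⟩
      have hlt : (I \ K').ncard < (I \ K).ncard := by
        rw [hIK']
        exact Set.ncard_lt_ncard (by
          refine ⟨diff_subset, fun h => ?_⟩
          exact (h ⟨heI, heK⟩).2 rfl) (hIfin.diff)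
      -- K' cannot be independent by minimality
      have hK'dep : ∃ C ∈ 𝒞, C ⊆ K' := by
        by_contra hno
        push_neg at hno
        have hind : Ind K' := ⟨insert_subset (hI.1 heI) (diff_subset.trans hKind.1), hno⟩
        have : K' ∈ S := ⟨hK'sub, hind, by omega⟩
        exact absurd (hKmin K' this) (by omega)
      obtain ⟨C, hC, hCsub⟩ := hK'dep
      refine ⟨C, hC, ?_, hCsub⟩
      by_contra heC
      exact hKind.2 C hC (fun x hx => ((hCsub hx).resolve_left (fun h => heC (h ▸ hx))).1)
    -- pick f ∈ K \ I
    have hKI : (K \ I).Nonempty := by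
      rw [Set.nonempty_iff_ne_empty]
      intro h
      have : K ⊆ I := fun x hx => by
        by_contra hxI
        exact (Set.eq_empty_iff_forall_notMem.mp h x) ⟨hx, hxI⟩
      exact absurd (Set.ncard_le_ncard this hIfin) (by omega)
    obtain ⟨f, hf⟩ := hKI
    obtain ⟨Cf, hCf, heCf, hCfsub⟩ := key f hf
    -- Cf is not contained in I, so has an element g ∉ I, g ≠ e
    obtain ⟨g, hgCf, hgI⟩ := not_subset.mp (fun h => hI.2 Cf hCf h)
    have hge : g ≠ e := fun h => hgI (h ▸ heI)
    have hgK : g ∈ K \ I := by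
      rcases hCfsub hgCf with h | h
      · exact absurd h hge
      · exact ⟨h.1, hgI⟩
    obtain ⟨Cg, hCg, heCg, hCgsub⟩ := key g hgK
    have hCfg : Cf ≠ Cg := by
      intro h
      rw [h] at hgCf
      rcases hCgsub hgCf with h' | h'
      · exact hge h'
      · exact h'.2 rfl
    obtain ⟨C₃, hC₃, hC₃sub⟩ := hfe Cf hCf Cg hCg hCfg e ⟨heCf, heCg⟩
    refine hKind.2 C₃ hC₃ (fun x hx => ?_)
    obtain ⟨hxu, hxe⟩ := hC₃sub hx
    rcases hxu with h | h
    · rcases hCfsub h with h' | h'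
      · exact absurd h' hxe
      · exact h'.1
    · rcases hCgsub h with h' | h'
      · exact absurd h' hxe
      · exact h'.1

/-- If `𝒞` is a collection of nonempty, pairwise incomparable subsets of a
finite set `E` such that every modular pair in `𝒞` satisfies circuit
elimination, then `𝒞` is the set of circuits of a matroid on `E`. -/
theorem circuits_of_modular_elimination (E : Set α) (hE : E.Finite)
    (𝒞 : Set (Set α))
    (hsub : ∀ C ∈ 𝒞, C ⊆ E)
    (hne : ∀ C ∈ 𝒞, C.Nonempty)
    (hinc : ∀ C ∈ 𝒞, ∀ D ∈ 𝒞, C ⊆ D → C = D)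
    (helim : ∀ C₁ ∈ 𝒞, ∀ C₂ ∈ 𝒞, C₁ ≠ C₂ →
      (∀ D₁ ∈ 𝒞, ∀ D₂ ∈ 𝒞, D₁ ≠ D₂ → ¬ (D₁ ∪ D₂ ⊂ C₁ ∪ C₂)) →
      ∀ e ∈ C₁ ∩ C₂, ∃ C₃ ∈ 𝒞, C₃ ⊆ (C₁ ∪ C₂) \ {e}) :
    ∃ M : Matroid α, M.E = E ∧ ∀ C, C ∈ 𝒞 ↔ M.IsCircuit' C := by
  have hfe : ∀ C₁ ∈ 𝒞, ∀ C₂ ∈ 𝒞, C₁ ≠ C₂ →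
      ∀ e ∈ C₁ ∩ C₂, ∃ C₃ ∈ 𝒞, C₃ ⊆ (C₁ ∪ C₂) \ {e} :=
    fun C₁ h₁ C₂ h₂ hne' =>
      aux_full_elim E hE 𝒞 hsub helim (C₁ ∪ C₂).ncard C₁ h₁ C₂ h₂ hne' le_rfl
  set M := (IndepMatroid.ofFinite hE (fun I => I ⊆ E ∧ ∀ C ∈ 𝒞, ¬ C ⊆ I)
    ⟨empty_subset _, fun C hC h => (hne C hC).ne_empty (subset_empty_iff.mp h)⟩
    (fun I J hJ hIJ => ⟨hIJ.trans hJ.1, fun C hC h => hJ.2 C hC (h.trans hIJ)⟩)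
    (aux_aug E hE 𝒞 hfe)
    (fun I hI => hI.1)).matroid with hM
  have hME : M.E = E := by simp [hM]
  have hMindep : ∀ I, M.Indep I ↔ (I ⊆ E ∧ ∀ C ∈ 𝒞, ¬ C ⊆ I) := by
    intro I; simp [hM]
  have hdep : ∀ X, M.Dep X ↔ ((∃ C ∈ 𝒞, C ⊆ X) ∧ X ⊆ E) := by
    intro X
    rw [Matroid.Dep, hME, hMindep]
    constructor
    · rintro ⟨hnind, hXE⟩
      refine ⟨?_, hXE⟩
      by_contra hno
      push_neg at hno
      exact hnind ⟨hXE, hno⟩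
    · rintro ⟨⟨C, hC, hCX⟩, hXE⟩
      exact ⟨fun h => h.2 C hC hCX, hXE⟩
  refine ⟨M, hME, fun C => ?_⟩
  constructor
  · intro hC
    refine ⟨(hdep C).mpr ⟨⟨C, hC, subset_rfl⟩, hsub C hC⟩, fun D hD hDdep => ?_⟩
    obtain ⟨⟨C', hC', hC'D⟩, _⟩ := (hdep D).mp hDdep
    have : C' = C := hinc C' hC' C hC (hC'D.trans hD.subset)
    exact hD.not_subset (this ▸ hC'D)
  · rintro ⟨hCdep, hmin⟩
    obtain ⟨⟨C', hC', hC'C⟩, hCE⟩ := (hdep C).mp hCdep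
    rcases eq_or_ne C' C with rfl | hne'
    · exact hC'
    · exact absurd ((hdep C').mpr ⟨⟨C', hC', subset_rfl⟩, hsub C' hC'⟩)
        (hmin C' (hC'C.ssubset_of_ne hne'))
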